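/- Let K be even, K_all a positive integer, T0 > 0, and let φ̃ ∈ ℤ^{K/2}. Define the index vector φ = (φ̃, K_all - 1 - φ̃) ∈ ℤ^K (i.e., symmetric against the point (K_all - 1)/2). Then for every real f_d, |(1/K) Σ_{k=0}^{K-1} e^{i 2π φ_k T0 f_d}| = |cos(π(K_all - 1)T0 f_d - arg(Σ_{k=0}^{K/2-1} e^{i2π φ̃_k T0 f_d}))| · |(2/K) Σ_{k=0}^{K/2-1} e^{i2π φ̃_k T0 f_d}|; in particular |(1/K) Σ_{k=0}^{K-1} e^{i2π φ_k T0 f_d}| ≤ |(2/K) Σ_{k=0}^{K/2-1} e^{i2π φ̃_k T0 f_d}|. -/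

import Mathlib

open Complex Real

lemma key_abs (S : ℂ) (θ : ℝ) :
    ‖(S + Complex.exp ((θ : ℂ) * Complex.I) * (starRingEnd ℂ) S)‖
      = 2 * |Real.cos (θ / 2 - Complex.arg S)| * ‖S‖ := by
  set r := ‖S‖ with hr
  set α := Complex.arg S with hα
  have hSdef : ((r : ℂ)) * Complex.exp ((α : ℂ) * Complex.I) = S :=
    Complex.norm_mul_exp_arg_mul_I S
  have hconj : (starRingEnd ℂ) S = (r : ℂ) * Complex.exp (-(α : ℂ) * Complex.I) := by
    rw [← hSdef]
    simp [map_mul, ← Complex.exp_conj, Complex.conj_ofReal, Complex.conj_I]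
  have e1 : Complex.exp ((α : ℂ) * Complex.I)
      = Complex.exp (((θ : ℂ) / 2) * Complex.I) * Complex.exp ((((α : ℝ) - θ / 2 : ℝ) : ℂ) * Complex.I) := by
    rw [← Complex.exp_add]; congr 1; push_cast; ring
  have e2 : Complex.exp ((θ : ℂ) * Complex.I) * Complex.exp (-(α : ℂ) * Complex.I)
      = Complex.exp (((θ : ℂ) / 2) * Complex.I) * Complex.exp (-(((α : ℝ) - θ / 2 : ℝ) : ℂ) * Complex.I) := by
    rw [← Complex.exp_add, ← Complex.exp_add]; congr 1; push_cast; ring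
  have h2cos : Complex.exp ((((α : ℝ) - θ / 2 : ℝ) : ℂ) * Complex.I)
      + Complex.exp (-(((α : ℝ) - θ / 2 : ℝ) : ℂ) * Complex.I)
      = 2 * Complex.cos (((α : ℝ) - θ / 2 : ℝ) : ℂ) := by
    rw [Complex.exp_mul_I, Complex.exp_mul_I, Complex.cos_neg, Complex.sin_neg]
    ring
  have hmain : S + Complex.exp ((θ : ℂ) * Complex.I) * (starRingEnd ℂ) S
      = (r : ℂ) * Complex.exp (((θ : ℂ) / 2) * Complex.I)
        * (2 * Complex.cos (((α : ℝ) - θ / 2 : ℝ) : ℂ)) := by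
    rw [hconj, ← hSdef, ← h2cos, e1]
    rw [show Complex.exp ((θ : ℂ) * Complex.I) * ((r:ℂ) * Complex.exp (-(α : ℂ) * Complex.I))
      = (r:ℂ) * (Complex.exp ((θ : ℂ) * Complex.I) * Complex.exp (-(α : ℂ) * Complex.I)) by ring, e2]
    ring
  rw [hmain, norm_mul, norm_mul, norm_mul, ← Complex.ofReal_cos, Complex.norm_real, Real.norm_eq_abs,
    Complex.norm_real, Real.norm_eq_abs, _root_.abs_of_nonneg (norm_nonneg S)]
  have : ‖(Complex.exp (((θ : ℂ) / 2) * Complex.I))‖ = 1 := by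
    simp [Complex.norm_exp]
  rw [this, show θ / 2 - α = -(α - θ / 2) by ring, Real.cos_neg]
  simp
  ring

theorem stmt8 (K Kall : ℕ) (hK : 0 < K) (hKeven : Even K) (hKall : 0 < Kall)
    (T0 fd : ℝ) (hT0 : 0 < T0) (φt : ℕ → ℤ)
    (S : ℂ)
    (hS : S = ∑ k ∈ Finset.range (K / 2),
      Complex.exp (2 * π * (φt k : ℝ) * T0 * fd * Complex.I)) :
    ‖((1 / (K : ℂ)) *
        (∑ k ∈ Finset.range (K / 2),
            Complex.exp (2 * π * (φt k : ℝ) * T0 * fd * Complex.I) +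
          ∑ k ∈ Finset.range (K / 2),
            Complex.exp (2 * π * ((Kall : ℝ) - 1 - (φt k : ℝ)) * T0 * fd * Complex.I)))‖ =
      |Real.cos (π * ((Kall : ℝ) - 1) * T0 * fd - Complex.arg S)| *
        ‖((2 / (K : ℂ)) * S)‖ ∧
    ‖((1 / (K : ℂ)) *
        (∑ k ∈ Finset.range (K / 2),
            Complex.exp (2 * π * (φt k : ℝ) * T0 * fd * Complex.I) +
          ∑ k ∈ Finset.range (K / 2),
            Complex.exp (2 * π * ((Kall : ℝ) - 1 - (φt k : ℝ)) * T0 * fd * Complex.I)))‖ ≤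
      ‖((2 / (K : ℂ)) * S)‖ := by
  set θ : ℝ := 2 * π * ((Kall : ℝ) - 1) * T0 * fd with hθ
  have hconjS : (starRingEnd ℂ) S = ∑ k ∈ Finset.range (K / 2),
      Complex.exp (-(2 * (π:ℂ) * ((φt k : ℝ):ℂ) * (T0:ℂ) * (fd:ℂ)) * Complex.I) := by
    rw [hS, map_sum]
    refine Finset.sum_congr rfl fun k _ => ?_
    rw [← Complex.exp_conj]
    congr 1
    simp only [map_mul, Complex.conj_ofReal, Complex.conj_I, map_ofNat]
    ring
  have hsum2 : ∑ k ∈ Finset.range (K / 2),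
      Complex.exp (2 * π * ((Kall : ℝ) - 1 - (φt k : ℝ)) * T0 * fd * Complex.I)
      = Complex.exp ((θ : ℂ) * Complex.I) * (starRingEnd ℂ) S := by
    rw [hconjS, Finset.mul_sum]
    refine Finset.sum_congr rfl fun k _ => ?_
    rw [← Complex.exp_add]
    congr 1
    push_cast [hθ]
    ring
  have hK' : (0:ℝ) < (K : ℝ) := by exact_mod_cast hK
  have habs : ‖((1 / (K : ℂ)) *
      (S + Complex.exp ((θ : ℂ) * Complex.I) * (starRingEnd ℂ) S))‖
      = |Real.cos (π * ((Kall : ℝ) - 1) * T0 * fd - Complex.arg S)| *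
        ‖((2 / (K : ℂ)) * S)‖ := by
    rw [norm_mul, key_abs S θ]
    rw [show θ / 2 = π * ((Kall : ℝ) - 1) * T0 * fd by rw [hθ]; ring]
    rw [norm_mul, norm_div, norm_div]
    simp [Complex.norm_natCast]
    ring
  rw [← hS, hsum2]
  refine ⟨habs, ?_⟩
  rw [habs]
  have h1 : |Real.cos (π * ((Kall : ℝ) - 1) * T0 * fd - Complex.arg S)| ≤ 1 :=
    Real.abs_cos_le_one _
  nlinarith [norm_nonneg ((2 / (K : ℂ)) * S)]
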